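/- For every λ > 0, the operator Σ + λI − γΣ₁ : H → H is bijective with bounded inverse, and the operator norm of its inverse satisfies ‖(Σ + λI − γΣ₁)^{-1}‖ ≤ 1/λ. -/

import Mathlib

open scoped InnerProductSpace

/-- Lemma: invertibility of the regularized TD operator: with `Σ` positive
self-adjoint with square root `S = Σ^{1/2}`, `Σ₁ = Σ^{1/2} Σ̃₁ Σ^{1/2}` where `‖Σ̃₁‖ ≤ 1`,
and `γ ∈ [0,1)`, for every `λ > 0` the operator `Σ + λI - γΣ₁` is bijective with bounded
inverse of operator norm at most `1/λ`. -/
theorem regularized_td_operator_invertible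
    {H : Type*} [NormedAddCommGroup H] [InnerProductSpace ℝ H] [CompleteSpace H]
    (Sig S T1 Sig1 : H →L[ℝ] H)
    (hSigSA : IsSelfAdjoint Sig) (hSigPos : ∀ f : H, 0 ≤ ⟪f, Sig f⟫_ℝ)
    (hSsa : IsSelfAdjoint S) (hSpos : ∀ f : H, 0 ≤ ⟪f, S f⟫_ℝ) (hSsq : S * S = Sig)
    (hT1 : ‖T1‖ ≤ 1) (hSig1 : Sig1 = S * T1 * S)
    (γ : ℝ) (hγ0 : 0 ≤ γ) (hγ1 : γ < 1) (b : H)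
    (lam : ℝ) (hlam : 0 < lam) :
    ∃ T : H →L[ℝ] H,
      (Sig + lam • 1 - γ • Sig1) * T = 1 ∧
      T * (Sig + lam • 1 - γ • Sig1) = 1 ∧
      ‖T‖ ≤ 1 / lam := by
  set A : H →L[ℝ] H := Sig + lam • 1 - γ • Sig1 with hA
  -- coercivity: lam * ‖f‖^2 ≤ ⟪A f, f⟫
  have key : ∀ f : H, lam * (‖f‖ * ‖f‖) ≤ ⟪A f, f⟫_ℝ := by
    intro f
    have hAf : ⟪A f, f⟫_ℝ = ⟪Sig f, f⟫_ℝ + lam * (‖f‖ * ‖f‖) - γ * ⟪Sig1 f, f⟫_ℝ := by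
      simp [hA, ContinuousLinearMap.sub_apply, ContinuousLinearMap.add_apply,
        inner_sub_left, inner_add_left, inner_smul_left, real_inner_self_eq_norm_mul_norm]
      exact Or.inl (sq _)
    have hSigf : ⟪Sig f, f⟫_ℝ = ‖S f‖ * ‖S f‖ := by
      rw [← hSsq]
      have : ⟪S (S f), f⟫_ℝ = ⟪S f, S f⟫_ℝ := by
        rw [← ContinuousLinearMap.adjoint_inner_left, hSsa.adjoint_eq]
      simpa [ContinuousLinearMap.mul_apply, real_inner_self_eq_norm_mul_norm, sq] using this
    have hSig1f : ⟪Sig1 f, f⟫_ℝ ≤ ‖S f‖ * ‖S f‖ := by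
      have h1 : ⟪Sig1 f, f⟫_ℝ = ⟪T1 (S f), S f⟫_ℝ := by
        rw [hSig1]
        have : ⟪S (T1 (S f)), f⟫_ℝ = ⟪T1 (S f), S f⟫_ℝ := by
          rw [← ContinuousLinearMap.adjoint_inner_left, hSsa.adjoint_eq]
        simpa [ContinuousLinearMap.mul_apply] using this
      rw [h1]
      calc ⟪T1 (S f), S f⟫_ℝ ≤ ‖T1 (S f)‖ * ‖S f‖ := real_inner_le_norm _ _
        _ ≤ (‖T1‖ * ‖S f‖) * ‖S f‖ := by
            apply mul_le_mul_of_nonneg_right (T1.le_opNorm _) (norm_nonneg _)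
        _ ≤ ‖S f‖ * ‖S f‖ := by
            apply mul_le_mul_of_nonneg_right _ (norm_nonneg _)
            nlinarith [norm_nonneg (S f)]
    have hγSig1 : γ * ⟪Sig1 f, f⟫_ℝ ≤ ‖S f‖ * ‖S f‖ := by
      calc γ * ⟪Sig1 f, f⟫_ℝ ≤ γ * (‖S f‖ * ‖S f‖) := by
            rcases le_or_gt (⟪Sig1 f, f⟫_ℝ) (‖S f‖ * ‖S f‖) with h | h
            · exact mul_le_mul_of_nonneg_left hSig1f hγ0
            · exact absurd hSig1f (not_le.mpr h)
        _ ≤ 1 * (‖S f‖ * ‖S f‖) := by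
            apply mul_le_mul_of_nonneg_right hγ1.le (mul_self_nonneg _)
        _ = ‖S f‖ * ‖S f‖ := one_mul _
    rw [hAf, hSigf]
    linarith
  -- bilinear form
  set B : H →L[ℝ] H →L[ℝ] ℝ := (innerSL ℝ).comp A with hB
  have hBapp : ∀ v w : H, B v w = ⟪A v, w⟫_ℝ := fun v w => rfl
  have coercive : IsCoercive B := ⟨lam, hlam, fun u => by rw [hBapp, mul_assoc]; exact key u⟩
  have hsharp : InnerProductSpace.continuousLinearMapOfBilin B = A := by
    ext v
    exact (InnerProductSpace.unique_continuousLinearMapOfBilin B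
      (fun w => (hBapp v w).symm)).symm
  set E := coercive.continuousLinearEquivOfBilin with hE
  have hEA : (E : H →L[ℝ] H) = A := by
    rw [hE]
    ext v
    have := coercive.continuousLinearEquivOfBilin_apply v
    exact hsharp ▸ rfl
  refine ⟨(E.symm : H →L[ℝ] H), ?_, ?_, ?_⟩
  · ext x
    have : A (E.symm x) = E (E.symm x) := by rw [← hEA]; rfl
    simp [ContinuousLinearMap.mul_apply, this]
  · ext x
    have : A x = E x := by rw [← hEA]; rfl
    simp [ContinuousLinearMap.mul_apply, this]
  · apply ContinuousLinearMap.opNorm_le_bound _ (by positivity)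
    intro x
    set f := E.symm x with hf
    have hAfx : A f = x := by
      have : A f = E f := by rw [← hEA]; rfl
      rw [this, hf]; simp
    have h1 : lam * (‖f‖ * ‖f‖) ≤ ‖x‖ * ‖f‖ := by
      calc lam * (‖f‖ * ‖f‖) ≤ ⟪A f, f⟫_ℝ := key f
        _ ≤ ‖A f‖ * ‖f‖ := real_inner_le_norm _ _
        _ = ‖x‖ * ‖f‖ := by rw [hAfx]
    have : lam * ‖f‖ ≤ ‖x‖ := by
      rcases eq_or_lt_of_le (norm_nonneg f) with h | h
      · rw [← h]; simpa using norm_nonneg x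
      · nlinarith
    calc ‖(E.symm : H →L[ℝ] H) x‖ = ‖f‖ := rfl
      _ ≤ ‖x‖ / lam := by rw [le_div_iff₀ hlam]; linarith
      _ = 1 / lam * ‖x‖ := by ring
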